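/- Let a, b ≥ 2 be integers and let W be the subgroup of the symmetric group of Fin a × Fin b consisting of all permutations that map each block Fin a × {j} onto some block Fin a × {j'} (so W is the imprimitive wreath product Sym(a) ≀ Sym(b) acting on ab points). Then m(W) = a + b − 2 if (a = 3 and b is odd) or (b = 3 and a is odd), and m(W) = a + b − 1 otherwise. -/

import Mathlib

open Pointwise

/-- A subset `A` of `Ω` is *non-self-separable* for the action of `G` if every translate
`g • A` meets `A`. -/
def NonSelfSep (G : Type*) [Group G] {Ω : Type*} [MulAction G Ω] (A : Set Ω) : Prop :=
  ∀ g : G, (A ∩ g • A).Nonempty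

/-- `mParam G Ω` is the minimum cardinality of a non-self-separable subset of `Ω`. -/
noncomputable def mParam (G Ω : Type*) [Group G] [MulAction G Ω] : ℕ :=
  sInf {k | ∃ A : Set Ω, A.ncard = k ∧ NonSelfSep G A}

/-- The imprimitive wreath product `Sym(a) ≀ Sym(b)`: the subgroup of the symmetric group
of `Fin a × Fin b` consisting of all permutations mapping each block `Fin a × {j}` onto
some block `Fin a × {j'}`. -/
def blockW (a b : ℕ) : Subgroup (Equiv.Perm (Fin a × Fin b)) where
  carrier := {π | ∀ j : Fin b, ∃ j' : Fin b,
    ⇑π '' {p : Fin a × Fin b | p.2 = j} = {p : Fin a × Fin b | p.2 = j'}}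
  one_mem' := fun j => ⟨j, by simp⟩
  mul_mem' := by
    intro π ρ hπ hρ j
    obtain ⟨j₁, h₁⟩ := hρ j
    obtain ⟨j₂, h₂⟩ := hπ j₁
    exact ⟨j₂, by rw [Equiv.Perm.coe_mul, Set.image_comp, h₁, h₂]⟩
  inv_mem' := by
    intro π hπ j
    rcases Nat.eq_zero_or_pos a with ha | ha
    · subst ha
      exact ⟨j, by simp [Set.eq_empty_of_isEmpty]⟩
    · choose τ hτ using hπ
      have hinj : Function.Injective τ := by
        intro j₁ j₂ h
        have himg : ⇑π '' {p : Fin a × Fin b | p.2 = j₁}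
            = ⇑π '' {p : Fin a × Fin b | p.2 = j₂} := by rw [hτ j₁, hτ j₂, h]
        have hBB := Set.image_injective.mpr π.injective himg
        have hmem : ((⟨0, ha⟩ : Fin a), j₁) ∈ {p : Fin a × Fin b | p.2 = j₁} := rfl
        rw [hBB] at hmem
        exact hmem
      obtain ⟨j₀, hj₀⟩ := Finite.injective_iff_surjective.mp hinj j
      refine ⟨j₀, ?_⟩
      rw [← hj₀, ← hτ j₀, Equiv.Perm.inv_def]
      exact Equiv.symm_image_image π _


namespace Stmt11Aux

open Finset

-- permutation avoiding lemma
lemma exists_perm_avoid {n : ℕ} (S T : Finset (Fin n)) (h : S.card + T.card ≤ n) :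
    ∃ π : Equiv.Perm (Fin n), ∀ x ∈ S, π x ∉ T := by
  classical
  have hST : S.card ≤ Tᶜ.card := by
    rw [Finset.card_compl]; simp only [Fintype.card_fin]; omega
  obtain ⟨S', hS'T, hcard⟩ := Finset.exists_subset_card_eq hST
  have hc1 : S.card = S'.card := hcard.symm
  have hc2 : Sᶜ.card = S'ᶜ.card := by
    rw [Finset.card_compl, Finset.card_compl, hc1]
  let e1 : {x : Fin n // x ∈ S} ≃ {x : Fin n // x ∈ S'} := Finset.equivOfCardEq hc1
  let e2 : {x : Fin n // ¬ x ∈ S} ≃ {x : Fin n // ¬ x ∈ S'} :=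
    ((Equiv.subtypeEquivRight (fun x => (Finset.mem_compl (s := S)).symm)).trans
      (Finset.equivOfCardEq hc2)).trans (Equiv.subtypeEquivRight (fun x => Finset.mem_compl))
  refine ⟨(Equiv.sumCompl (· ∈ S)).symm.trans ((e1.sumCongr e2).trans (Equiv.sumCompl (· ∈ S'))), ?_⟩
  intro x hx
  have h1 : (Equiv.sumCompl (· ∈ S)).symm x = Sum.inl ⟨x, hx⟩ :=
    Equiv.sumCompl_symm_apply_of_pos hx
  have h2 : ((Equiv.sumCompl (· ∈ S)).symm.trans ((e1.sumCongr e2).trans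
      (Equiv.sumCompl (· ∈ S')))) x = (e1 ⟨x, hx⟩ : Fin n) := by
    simp [h1]
  rw [h2]
  have : (e1 ⟨x, hx⟩ : Fin n) ∈ S' := (e1 ⟨x, hx⟩).2
  have := hS'T this
  rw [Finset.mem_compl] at this
  exact this

def mkW {a b : ℕ} (σ : Equiv.Perm (Fin b)) (π : Fin b → Equiv.Perm (Fin a)) :
    Equiv.Perm (Fin a × Fin b) where
  toFun p := (π p.2 p.1, σ p.2)
  invFun p := ((π (σ.symm p.2)).symm p.1, σ.symm p.2)
  left_inv p := by simp
  right_inv p := by simp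

lemma mkW_apply {a b : ℕ} (σ : Equiv.Perm (Fin b)) (π : Fin b → Equiv.Perm (Fin a))
    (p : Fin a × Fin b) : mkW σ π p = (π p.2 p.1, σ p.2) := rfl

lemma mkW_mem {a b : ℕ} (σ : Equiv.Perm (Fin b)) (π : Fin b → Equiv.Perm (Fin a)) :
    mkW σ π ∈ blockW a b := by
  intro j
  refine ⟨σ j, ?_⟩
  ext ⟨x, j'⟩
  constructor
  · rintro ⟨⟨y, j''⟩, hj, heq⟩
    simp only [Set.mem_setOf_eq] at hj ⊢
    subst hj
    rw [mkW_apply] at heq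
    exact (congrArg Prod.snd heq).symm
  · rintro h
    refine ⟨((π j).symm x, j), rfl, ?_⟩
    simp only [Set.mem_setOf_eq] at h
    rw [mkW_apply]
    simp [h]

lemma exists_tau {a b : ℕ} (ha : 0 < a) {g : Equiv.Perm (Fin a × Fin b)}
    (hg : g ∈ blockW a b) :
    ∃ τ : Fin b → Fin b, Function.Injective τ ∧ ∀ p : Fin a × Fin b, (g p).2 = τ p.2 := by
  choose τ hτ using hg
  refine ⟨τ, ?_, ?_⟩
  · intro j₁ j₂ h
    have himg : ⇑g '' {p : Fin a × Fin b | p.2 = j₁} = ⇑g '' {p : Fin a × Fin b | p.2 = j₂} := by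
      rw [hτ j₁, hτ j₂, h]
    have hBB := Set.image_injective.mpr g.injective himg
    have hmem : ((⟨0, ha⟩ : Fin a), j₁) ∈ {p : Fin a × Fin b | p.2 = j₁} := rfl
    rw [hBB] at hmem
    exact hmem
  · intro p
    have hm : g p ∈ ⇑g '' {q : Fin a × Fin b | q.2 = p.2} := ⟨p, rfl, rfl⟩
    rw [hτ p.2] at hm
    exact hm

lemma lemN {a b k m u v : ℕ} (ha : 2 ≤ a) (hb : 2 ≤ b) (hk : 1 ≤ k)
    (hbm : 2*k + m = b + 1) (hvu : v ≤ u) (hua : u ≤ a) (hauv : a + 1 ≤ u + v) :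
    a + b - 2 ≤ k*u + m*v ∧
      (¬ ((a = 3 ∧ Odd b) ∨ (b = 3 ∧ Odd a)) → a + b - 1 ≤ k*u + m*v) := by
  have hv : 1 ≤ v := by omega
  have h2u : a + 1 ≤ 2*u := by omega
  -- case a = 2
  rcases eq_or_lt_of_le ha with ha2 | ha3
  · -- a = 2: u = 2
    have hu2 : u = 2 := by omega
    have hmv : m ≤ m * v := Nat.le_mul_of_pos_right m (by omega)
    subst hu2
    have : 2*k + m ≤ k*2 + m*v := by omega
    constructor
    · omega
    · intro _; omega
  -- now 3 ≤ a
  have ha3' : 3 ≤ a := ha3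
  rcases Nat.eq_zero_or_pos m with hm0 | hm1
  · -- m = 0, b = 2k - 1 odd
    subst hm0
    have hk2 : 2 ≤ k := by omega
    have hoddb : Odd b := ⟨k - 1, by omega⟩
    have hgen : a + b ≤ k*u + 2 := by
      -- 2ku ≥ k(a+1) ≥ 2a + 4k - 6, cert (k-2)(a-3) ≥ 0
      zify
      nlinarith [mul_nonneg (show (0:ℤ) ≤ (k:ℤ) - 2 by omega) (show (0:ℤ) ≤ (a:ℤ) - 3 by omega),
        mul_nonneg (show (0:ℤ) ≤ (k:ℤ) by positivity) (show (0:ℤ) ≤ 2*(u:ℤ) - (a:ℤ) - 1 by omega)]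
    refine ⟨by omega, ?_⟩
    intro hnE
    have hane3 : a ≠ 3 := fun h => hnE (Or.inl ⟨h, hoddb⟩)
    rcases Nat.even_or_odd a with haeven | haodd
    · -- a even ≥ 4
      obtain ⟨t, rfl⟩ := haeven
      have h2u' : t + 1 ≤ u := by omega
      have : (t+1) * 2 ≤ u * 2 := by omega
      suffices h : t + t + b ≤ k*u + 1 by omega
      zify
      nlinarith [mul_nonneg (show (0:ℤ) ≤ (k:ℤ) - 2 by omega) (show (0:ℤ) ≤ (t:ℤ) - 1 by omega),
        mul_nonneg (show (0:ℤ) ≤ (k:ℤ) by positivity) (show (0:ℤ) ≤ (u:ℤ) - (t:ℤ) - 1 by omega)]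
    · -- a odd ≥ 5, and k ≥ 3 since k = 2 would give b = 3 (exceptional)
      have hk3 : 3 ≤ k := by
        rcases eq_or_lt_of_le hk2 with h2 | h3
        · exfalso; exact hnE (Or.inr ⟨by omega, haodd⟩)
        · omega
      have ha5 : 5 ≤ a := by
        obtain ⟨t, rfl⟩ := haodd; omega
      suffices h : a + b ≤ k*u + 1 by omega
      zify
      nlinarith [mul_nonneg (show (0:ℤ) ≤ (k:ℤ) - 3 by omega) (show (0:ℤ) ≤ (a:ℤ) - 3 by omega),
        mul_nonneg (show (0:ℤ) ≤ (k:ℤ) by positivity) (show (0:ℤ) ≤ 2*(u:ℤ) - (a:ℤ) - 1 by omega)]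
  · -- m ≥ 1 : full bound a + b - 1 always
    have hfull : a + b ≤ k*u + m*v + 1 := by
      rcases le_or_gt k m with hkm | hmk
      · -- k ≤ m: S ≥ k(u+v) + (m-k)v ≥ k(a+1) + (m-k)
        zify
        nlinarith [mul_nonneg (show (0:ℤ) ≤ (k:ℤ) - 1 by omega) (show (0:ℤ) ≤ (a:ℤ) - 2 by omega),
          mul_nonneg (show (0:ℤ) ≤ (m:ℤ) - (k:ℤ) by omega) (show (0:ℤ) ≤ (v:ℤ) - 1 by omega),
          mul_nonneg (show (0:ℤ) ≤ (k:ℤ) by positivity) (show (0:ℤ) ≤ (u:ℤ) + (v:ℤ) - (a:ℤ) - 1 by omega)]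
      · -- k > m: 2S ≥ 2m(a+1) + (k-m)(a+1)
        zify
        nlinarith [mul_nonneg (show (0:ℤ) ≤ (m:ℤ) - 1 by omega) (show (0:ℤ) ≤ (a:ℤ) - 1 by omega),
          mul_nonneg (show (0:ℤ) ≤ (k:ℤ) - 1 by omega) (show (0:ℤ) ≤ (a:ℤ) - 3 by omega),
          mul_nonneg (show (0:ℤ) ≤ (m:ℤ) by positivity) (show (0:ℤ) ≤ (u:ℤ) + (v:ℤ) - (a:ℤ) - 1 by omega),
          mul_nonneg (show (0:ℤ) ≤ (k:ℤ) - (m:ℤ) by omega) (show (0:ℤ) ≤ 2*(u:ℤ) - (a:ℤ) - 1 by omega)]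
    exact ⟨by omega, fun _ => by omega⟩

lemma sum_bound_counts {b u v k n : ℕ} (s : Fin b → ℕ) (hvu : v ≤ u)
    (hK : k ≤ (univ.filter (fun j => u ≤ s j)).card)
    (hV : n ≤ (univ.filter (fun j => v ≤ s j)).card) (hkn : k ≤ n) :
    k * u + (n - k) * v ≤ ∑ j, s j := by
  classical
  set K := univ.filter (fun j => u ≤ s j) with hKdef
  set V := univ.filter (fun j => v ≤ s j) with hVdef
  have hKV : K ⊆ V := by
    intro j hj
    simp only [hKdef, hVdef, mem_filter, mem_univ, true_and] at hj ⊢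
    omega
  have h1 : ∑ j ∈ V, s j ≤ ∑ j, s j := Finset.sum_le_sum_of_subset (Finset.subset_univ V)
  have h2 : ∑ j ∈ V \ K, s j + ∑ j ∈ K, s j = ∑ j ∈ V, s j := Finset.sum_sdiff hKV
  have h3 : K.card * u ≤ ∑ j ∈ K, s j := by
    calc K.card * u = K.card • u := (smul_eq_mul ..).symm
    _ ≤ ∑ j ∈ K, s j := Finset.card_nsmul_le_sum K s u
        (fun j hj => by simp only [hKdef, mem_filter] at hj; exact hj.2)
  have h4 : (V \ K).card * v ≤ ∑ j ∈ V \ K, s j := by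
    calc (V \ K).card * v = (V \ K).card • v := (smul_eq_mul ..).symm
    _ ≤ ∑ j ∈ V \ K, s j := Finset.card_nsmul_le_sum _ s v
        (fun j hj => by
          simp only [hVdef, mem_sdiff, mem_filter] at hj; exact hj.1.2)
  have hcard : (V \ K).card = V.card - K.card := Finset.card_sdiff_of_subset hKV
  have hKVc : K.card ≤ V.card := Finset.card_le_card hKV
  -- arithmetic
  have key : k * u + (n - k) * v ≤ K.card * u + (V \ K).card * v := by
    rw [hcard]
    zify [hkn, hKVc]
    nlinarith [mul_nonneg (show (0:ℤ) ≤ (K.card:ℤ) - k by omega)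
        (show (0:ℤ) ≤ (u:ℤ) - v by omega),
      mul_nonneg (show (0:ℤ) ≤ (V.card:ℤ) - n by omega) (show (0:ℤ) ≤ (v:ℤ) by positivity)]
  omega

lemma lemM {a b : ℕ} (ha : 2 ≤ a) (hb : 2 ≤ b) (s : Fin b → ℕ) (hs : ∀ j, s j ≤ a)
    (hnss : ∀ σ : Equiv.Perm (Fin b), ∃ j, a < s j + s (σ j)) :
    a + b - 2 ≤ ∑ j, s j ∧
      (¬((a = 3 ∧ Odd b) ∨ (b = 3 ∧ Odd a)) → a + b - 1 ≤ ∑ j, s j) := by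
  classical
  set ρ := Tuple.sort s with hρ
  have hw : Monotone (s ∘ ρ) := Tuple.monotone_sort s
  obtain ⟨j, hj⟩ := hnss ((ρ * Fin.revPerm * ρ⁻¹ : Equiv.Perm (Fin b)))
  have hσ : s j + s ((ρ * Fin.revPerm * ρ⁻¹ : Equiv.Perm (Fin b)) j)
      = (s ∘ ρ) (ρ⁻¹ j) + (s ∘ ρ) ((ρ⁻¹ j).rev) := by
    simp only [Function.comp_apply, Equiv.Perm.mul_apply]
    rw [show ρ (ρ⁻¹ j) = j from Equiv.apply_symm_apply ρ j]
    rfl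
  rw [hσ] at hj
  set i₀ := ρ⁻¹ j with hi₀
  -- wlog i' ≤ i'.rev
  obtain ⟨i, hile, hival⟩ : ∃ i : Fin b, i ≤ i.rev ∧
      a < (s ∘ ρ) i + (s ∘ ρ) i.rev := by
    rcases le_total i₀ i₀.rev with h | h
    · exact ⟨i₀, h, hj⟩
    · exact ⟨i₀.rev, by rwa [Fin.rev_rev], by rw [Fin.rev_rev]; omega⟩
  have hvu : (s ∘ ρ) i ≤ (s ∘ ρ) i.rev := hw hile
  have hua : (s ∘ ρ) i.rev ≤ a := hs _
  have hauv : a + 1 ≤ (s ∘ ρ) i.rev + (s ∘ ρ) i := by omega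
  -- counts
  have hrevval : (i.rev : ℕ) = b - ((i : ℕ) + 1) := Fin.val_rev i
  have hb0 : 0 < b := by omega
  have hii : (i : ℕ) < b := i.isLt
  have h2i : 2 * (i : ℕ) ≤ b - 1 := by
    have := hile
    rw [Fin.le_def, hrevval] at this
    omega
  set k := (i : ℕ) + 1 with hk
  set n := b - (i : ℕ) with hn
  have hcount : ∀ (c : Fin b), (b - (c : ℕ)) ≤ (univ.filter (fun j' => (s ∘ ρ) c ≤ s j')).card := by
    intro c
    have himg : (Finset.Ici c).image ρ ⊆ univ.filter (fun j' => (s ∘ ρ) c ≤ s j') := by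
      intro x hx
      simp only [Finset.mem_image, Finset.mem_Ici] at hx
      obtain ⟨y, hy, rfl⟩ := hx
      simp only [mem_filter, mem_univ, true_and]
      exact hw hy
    calc b - (c : ℕ) = (Finset.Ici c).card := (Fin.card_Ici c).symm
    _ = ((Finset.Ici c).image ρ).card := (Finset.card_image_of_injective _ ρ.injective).symm
    _ ≤ _ := Finset.card_le_card himg
  have hK : k ≤ (univ.filter (fun j' => (s ∘ ρ) i.rev ≤ s j')).card := by
    have := hcount i.rev
    rw [hrevval] at this
    omega
  have hV : n ≤ (univ.filter (fun j' => (s ∘ ρ) i ≤ s j')).card := hcount i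
  have hsum : k * ((s ∘ ρ) i.rev) + (n - k) * ((s ∘ ρ) i) ≤ ∑ j', s j' :=
    sum_bound_counts s hvu hK hV (by omega)
  have hbm : 2 * k + (n - k) = b + 1 := by omega
  obtain ⟨h1, h2⟩ := lemN ha hb (by omega) hbm hvu hua hauv
  refine ⟨by omega, fun hnE => ?_⟩
  have := h2 hnE
  omega

lemma lowerBound {a b : ℕ} (ha : 2 ≤ a) (hb : 2 ≤ b) (A : Set (Fin a × Fin b))
    (hA : NonSelfSep (blockW a b) A) :
    a + b - 2 ≤ A.ncard ∧
      (¬((a = 3 ∧ Odd b) ∨ (b = 3 ∧ Odd a)) → a + b - 1 ≤ A.ncard) := by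
  classical
  set S : Fin b → Finset (Fin a) := fun j => univ.filter (fun x => (x, j) ∈ A) with hS
  set s : Fin b → ℕ := fun j => (S j).card with hs
  have hcard : A.ncard = ∑ j, s j := by
    rw [Set.ncard_eq_toFinset_card' A]
    rw [Finset.card_eq_sum_card_fiberwise (f := Prod.snd) (t := univ) (fun x _ => mem_univ _)]
    refine Finset.sum_congr rfl (fun j _ => ?_)
    refine Finset.card_bij' (fun p _ => p.1) (fun x _ => (x, j)) ?_ ?_ ?_ ?_
    · rintro ⟨x, j'⟩ hp
      simp only [Finset.mem_filter, Set.mem_toFinset] at hp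
      simp only [hS, Finset.mem_filter, Finset.mem_univ, true_and]
      rcases hp with ⟨h1, h2⟩
      rwa [← h2]
    · intro x hx
      simp only [hS, Finset.mem_filter, Finset.mem_univ, true_and] at hx
      simp only [Finset.mem_filter, Set.mem_toFinset]
      exact ⟨hx, trivial⟩
    · rintro ⟨x, j'⟩ hp
      simp only [Finset.mem_filter, Set.mem_toFinset] at hp
      simp [hp.2]
    · intro x hx; rfl
  have hsle : ∀ j, s j ≤ a := fun j => by
    simpa using (Finset.card_filter_le univ (fun x => (x, j) ∈ A))
  have hnss : ∀ σ : Equiv.Perm (Fin b), ∃ j, a < s j + s (σ j) := by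
    intro σ
    by_contra hcon
    push_neg at hcon
    have hπ : ∀ j : Fin b, ∃ π : Equiv.Perm (Fin a), ∀ x ∈ S j, π x ∉ S (σ j) := by
      intro j
      exact exists_perm_avoid (S j) (S (σ j)) (hcon j)
    choose π hπ using hπ
    obtain ⟨p, hpA, hpg⟩ := hA ⟨mkW σ π, mkW_mem σ π⟩
    rw [Set.mem_smul_set] at hpg
    obtain ⟨q, hqA, hq⟩ := hpg
    have hq' : mkW σ π q = p := by
      simpa [Submonoid.smul_def, Equiv.Perm.smul_def] using hq
    obtain ⟨x, jq⟩ := q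
    rw [mkW_apply] at hq'
    have hxS : x ∈ S jq := by
      simp only [hS, Finset.mem_filter, Finset.mem_univ, true_and]
      exact hqA
    have hnot : π jq x ∉ S (σ jq) := hπ jq x hxS
    apply hnot
    simp only [hS, Finset.mem_filter, Finset.mem_univ, true_and]
    rw [hq']
    exact hpA
  rw [hcard]
  exact lemM ha hb s hsle hnss

lemma upper_gen {a b : ℕ} (ha : 2 ≤ a) (hb : 2 ≤ b) :
    ∃ A : Set (Fin a × Fin b), A.ncard = a + b - 1 ∧ NonSelfSep (blockW a b) A := by
  classical
  have ha0 : 0 < a := by omega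
  have hb0 : 0 < b := by omega
  set o : Fin a := ⟨0, ha0⟩
  set z : Fin b := ⟨0, hb0⟩
  set B0 : Set (Fin a × Fin b) := {p | p.2 = z} with hB0
  set L : Set (Fin a × Fin b) := {p | p.1 = o} with hL
  refine ⟨B0 ∪ L, ?_, ?_⟩
  · have h1 : B0.ncard = a := by
      have : B0 = (fun x : Fin a => (x, z)) '' Set.univ := by
        ext ⟨x, j⟩
        simp [hB0, eq_comm]
      rw [this, Set.ncard_image_of_injective _ (fun x y h => (Prod.mk.injEq _ _ _ _).mp h |>.1),
        Set.ncard_univ, Nat.card_eq_fintype_card, Fintype.card_fin]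
    have h2 : L.ncard = b := by
      have : L = (fun j : Fin b => (o, j)) '' Set.univ := by
        ext ⟨x, j⟩
        simp [hL, eq_comm]
      rw [this, Set.ncard_image_of_injective _ (fun x y h => (Prod.mk.injEq _ _ _ _).mp h |>.2),
        Set.ncard_univ, Nat.card_eq_fintype_card, Fintype.card_fin]
    have h3 : (B0 ∩ L).ncard = 1 := by
      have : B0 ∩ L = {(o, z)} := by
        ext ⟨x, j⟩
        constructor
        · rintro ⟨h1, h2⟩
          simp only [hB0, hL, Set.mem_setOf_eq] at h1 h2
          simp [h1, h2, Prod.ext_iff]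
        · rintro h
          simp only [Set.mem_singleton_iff, Prod.ext_iff] at h
          exact ⟨by simp [hB0, h.2], by simp [hL, h.1]⟩
      rw [this, Set.ncard_singleton]
    have h4 := Set.ncard_union_add_ncard_inter B0 L (Set.toFinite _) (Set.toFinite _)
    omega
  · intro g
    obtain ⟨τ, hτinj, hτ⟩ := exists_tau ha0 g.2
    refine ⟨(o, τ z), Or.inr rfl, ?_⟩
    rw [Set.mem_smul_set]
    -- find q with q.2 = z and ↑g q = (o, τ z)
    have hsurj : Function.Surjective (⇑(g : Equiv.Perm (Fin a × Fin b))) :=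
      (g : Equiv.Perm (Fin a × Fin b)).surjective
    obtain ⟨q, hq⟩ := hsurj (o, τ z)
    have hq2 : τ q.2 = τ z := by
      have := hτ q
      rw [hq] at this
      exact this.symm
    have hqz : q.2 = z := hτinj hq2
    refine ⟨q, Or.inl hqz, ?_⟩
    simpa [Subgroup.smul_def, Equiv.Perm.smul_def] using hq

lemma card_filter_val_lt (n c : ℕ) (h : c ≤ n) :
    (univ.filter (fun x : Fin n => (x : ℕ) < c)).card = c := by
  have key : (univ.filter (fun x : Fin n => (x : ℕ) < c)).card = (Finset.range c).card := by
    refine Finset.card_bij' (fun x _ => (x : ℕ)) (fun m hm => ⟨m, ?_⟩) ?_ ?_ ?_ ?_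
    · exact lt_of_lt_of_le (Finset.mem_range.mp hm) h
    · intro x hx
      simp only [mem_filter] at hx
      exact Finset.mem_range.mpr hx.2
    · intro m hm
      simp only [mem_filter, mem_univ, true_and]
      exact Finset.mem_range.mp hm
    · intro x hx; rfl
    · intro m hm; rfl
  rw [key, Finset.card_range]

-- intersection of two big finsets in a fintype
lemma big_inter_nonempty {α : Type*} [Fintype α] [DecidableEq α] (s t : Finset α)
    (h : Fintype.card α < s.card + t.card) : ∃ x, x ∈ s ∧ x ∈ t := by
  have h1 := Finset.card_union_add_card_inter s t
  have h2 : (s ∪ t).card ≤ Fintype.card α := by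
    rw [← Finset.card_univ]
    exact Finset.card_le_card (Finset.subset_univ _)
  have h3 : 0 < (s ∩ t).card := by omega
  obtain ⟨x, hx⟩ := Finset.card_pos.mp h3
  exact ⟨x, Finset.mem_inter.mp hx⟩

lemma upper_exc {a b : ℕ} (c h : ℕ) (hca : c ≤ a) (hhb : h ≤ b)
    (h2c : a < 2*c) (h2h : b < 2*h) (ha0 : 0 < a) :
    ∃ A : Set (Fin a × Fin b), A.ncard = c * h ∧ NonSelfSep (blockW a b) A := by
  classical
  set A : Set (Fin a × Fin b) := {p | (p.1 : ℕ) < c ∧ (p.2 : ℕ) < h} with hA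
  refine ⟨A, ?_, ?_⟩
  · have hT : A.toFinset =
        (univ.filter (fun x : Fin a => (x : ℕ) < c)) ×ˢ
        (univ.filter (fun j : Fin b => (j : ℕ) < h)) := by
      ext ⟨x, j⟩
      simp [hA, Finset.mem_product, and_comm]
    rw [Set.ncard_eq_toFinset_card' A, hT, Finset.card_product,
      card_filter_val_lt a c hca, card_filter_val_lt b h hhb]
  · intro g
    obtain ⟨τ, hτinj, hτ⟩ := exists_tau ha0 g.2
    -- pigeonhole on blocks
    set HF : Finset (Fin b) := univ.filter (fun j => (j : ℕ) < h) with hHF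
    have hHFcard : HF.card = h := card_filter_val_lt b h hhb
    have himgcard : (HF.image τ).card = h := by
      rw [Finset.card_image_of_injective _ hτinj, hHFcard]
    obtain ⟨j', hj'H, hj'img⟩ := big_inter_nonempty HF (HF.image τ)
      (by rw [hHFcard, himgcard, Fintype.card_fin]; omega)
    obtain ⟨j, hjH, hjτ⟩ := Finset.mem_image.mp hj'img
    -- pigeonhole within the block j'
    set f : Fin a → Fin a := fun x => ((g : Equiv.Perm (Fin a × Fin b)) (x, j)).1 with hf
    have hfinj : Function.Injective f := by
      intro x y hxy
      have h2 : ∀ x : Fin a, ((g : Equiv.Perm (Fin a × Fin b)) (x, j)).2 = τ j :=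
        fun x => hτ (x, j)
      have : (g : Equiv.Perm (Fin a × Fin b)) (x, j)
          = (g : Equiv.Perm (Fin a × Fin b)) (y, j) :=
        Prod.ext hxy (by rw [h2 x, h2 y])
      have := (g : Equiv.Perm (Fin a × Fin b)).injective this
      exact (Prod.mk.injEq _ _ _ _).mp this |>.1
    set P : Finset (Fin a) := univ.filter (fun x => (x : ℕ) < c) with hP
    have hPcard : P.card = c := card_filter_val_lt a c hca
    have hQcard : (P.image f).card = c := by
      rw [Finset.card_image_of_injective _ hfinj, hPcard]
    obtain ⟨y, hyP, hyQ⟩ := big_inter_nonempty P (P.image f)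
      (by rw [hPcard, hQcard, Fintype.card_fin]; omega)
    obtain ⟨x, hxP, hxf⟩ := Finset.mem_image.mp hyQ
    refine ⟨(y, τ j), ⟨?_, ?_⟩, ?_⟩
    · simp only [hP, mem_filter] at hyP
      exact hyP.2
    · rw [hjτ]
      simp only [hHF, mem_filter] at hj'H
      exact hj'H.2
    · rw [Set.mem_smul_set]
      refine ⟨(x, j), ⟨?_, ?_⟩, ?_⟩
      · simp only [hP, mem_filter] at hxP
        exact hxP.2
      · simp only [hHF, mem_filter] at hjH
        exact hjH.2
      · have h1 : ((g : Equiv.Perm (Fin a × Fin b)) (x, j)).1 = y := hxf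
        have h2 : ((g : Equiv.Perm (Fin a × Fin b)) (x, j)).2 = τ j := hτ (x, j)
        have : (g : Equiv.Perm (Fin a × Fin b)) (x, j) = (y, τ j) := by
          rw [← h1, ← h2]
        simpa [Subgroup.smul_def, Equiv.Perm.smul_def] using this

end Stmt11Aux

open Stmt11Aux in
/-- For integers `a, b ≥ 2`, the imprimitive wreath product
`W = Sym(a) ≀ Sym(b)` acting on `ab` points satisfies `m(W) = a + b − 2` if
(`a = 3` and `b` is odd) or (`b = 3` and `a` is odd), and `m(W) = a + b − 1` otherwise. -/
theorem stmt11 (a b : ℕ) (ha : 2 ≤ a) (hb : 2 ≤ b) :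
    (((a = 3 ∧ Odd b) ∨ (b = 3 ∧ Odd a)) →
      mParam (blockW a b) (Fin a × Fin b) = a + b - 2) ∧
    (¬ ((a = 3 ∧ Odd b) ∨ (b = 3 ∧ Odd a)) →
      mParam (blockW a b) (Fin a × Fin b) = a + b - 1) := by
  constructor
  · intro hE
    have hmem : (a + b - 2) ∈
        {k | ∃ A : Set (Fin a × Fin b), A.ncard = k ∧ NonSelfSep (blockW a b) A} := by
      rcases hE with ⟨ha3, hob⟩ | ⟨hb3, hoa⟩
      · obtain ⟨t, hbt⟩ := hob
        subst ha3; subst hbt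
        obtain ⟨A, hc, hn⟩ := upper_exc (a := 3) (b := 2*t+1) 2 (t+1)
          (by omega) (by omega) (by omega) (by omega) (by omega)
        exact ⟨A, hc.trans (by omega), hn⟩
      · obtain ⟨t, hat⟩ := hoa
        subst hb3; subst hat
        obtain ⟨A, hc, hn⟩ := upper_exc (a := 2*t+1) (b := 3) (t+1) 2
          (by omega) (by omega) (by omega) (by omega) (by omega)
        exact ⟨A, hc.trans (by omega), hn⟩
    refine le_antisymm (Nat.sInf_le hmem) (le_csInf ⟨_, hmem⟩ ?_)
    rintro k ⟨A, rfl, hA⟩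
    exact (lowerBound ha hb A hA).1
  · intro hnE
    have hmem : (a + b - 1) ∈
        {k | ∃ A : Set (Fin a × Fin b), A.ncard = k ∧ NonSelfSep (blockW a b) A} := by
      obtain ⟨A, hc, hn⟩ := upper_gen ha hb
      exact ⟨A, hc, hn⟩
    refine le_antisymm (Nat.sInf_le hmem) (le_csInf ⟨_, hmem⟩ ?_)
    rintro k ⟨A, rfl, hA⟩
    exact (lowerBound ha hb A hA).2 hnE
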